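/- Let Y be a finite set of distinct K-rational points of P^{k-1}, let Q ∈ Y, and let L̃ ∈ R_1 be a linear form with L̃(v_P) ≠ 0 for every P ∈ Y. If h is a homogeneous polynomial that vanishes at every point of Y \ {Q} and satisfies h(v_Q) ≠ 0, then deg(h) ≥ s(Y), where s(Y) is the minimum socle degree computed with respect to L̃. -/

import Mathlib

open MvPolynomial

/-- The representative vectors define pairwise distinct points of projective space. -/
def ProjectivelyDistinct {K : Type*} [Field K] {n k : ℕ} (v : Fin n → Fin k → K) : Prop :=
  ∀ i j : Fin n, i ≠ j → ∀ c : K, v i ≠ c • v j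

/-- The points are in general linear position: any at most `k` of them are linearly
independent. -/
def GeneralLinearPosition (K : Type*) [Field K] {n k : ℕ} (v : Fin n → Fin k → K) : Prop :=
  ∀ S : Finset (Fin n), S.card ≤ k → LinearIndependent K (fun i : S => v (i : Fin n))

/-- Minimum distance of the evaluation code of order `a`. -/
noncomputable def minDist {K : Type*} [Field K] {n k : ℕ} (a : ℕ) (v : Fin n → Fin k → K) : ℕ :=
  sInf { m | ∃ f : MvPolynomial (Fin k) K, f.IsHomogeneous a ∧
      (∃ i, eval (v i) f ≠ 0) ∧ m = Set.ncard {i | eval (v i) f ≠ 0} }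

/-- Initial degree of the vanishing ideal of the subfamily of points indexed by `S`. -/
noncomputable def initDegOn {K : Type*} [Field K] {n k : ℕ}
    (v : Fin n → Fin k → K) (S : Set (Fin n)) : ℕ :=
  sInf { d | ∃ f : MvPolynomial (Fin k) K, f ≠ 0 ∧ f.IsHomogeneous d ∧ ∀ i ∈ S, eval (v i) f = 0 }

/-- Degree-`a` part of the vanishing ideal of the points indexed by `S`, as a subspace. -/
noncomputable def homVan {K : Type*} [Field K] {n k : ℕ} (a : ℕ)
    (v : Fin n → Fin k → K) (S : Set (Fin n)) : Submodule K (MvPolynomial (Fin k) K) :=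
  homogeneousSubmodule (Fin k) K a ⊓
    ⨅ i ∈ S, LinearMap.ker ((aeval (v i) : MvPolynomial (Fin k) K →ₐ[K] K).toLinearMap)

/-- Hilbert function of `R/I(X)` where `X` is the set of points indexed by `S`. -/
noncomputable def HFpts {K : Type*} [Field K] {n k : ℕ}
    (v : Fin n → Fin k → K) (S : Set (Fin n)) (i : ℕ) : ℕ :=
  Module.finrank K (homogeneousSubmodule (Fin k) K i) - Module.finrank K (homVan i v S)

/-- Maximum number of the points lying on a common hyperplane. -/
noncomputable def hypNum {K : Type*} [Field K] {n k : ℕ} (v : Fin n → Fin k → K) : ℕ :=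
  sSup { m | ∃ L : MvPolynomial (Fin k) K, L ≠ 0 ∧ L.IsHomogeneous 1 ∧
      m = Set.ncard {i | eval (v i) L = 0} }

/-- The homogeneous vanishing ideal of the points indexed by `S`. -/
noncomputable def projIdeal {K : Type*} [Field K] {n k : ℕ}
    (v : Fin n → Fin k → K) (S : Set (Fin n)) : Ideal (MvPolynomial (Fin k) K) :=
  Ideal.span { f | (∃ d, f.IsHomogeneous d) ∧ ∀ i ∈ S, eval (v i) f = 0 }

/-- The minimum socle degree of the Artinian reduction by the linear form `L` of the
coordinate ring of the points indexed by `S`. -/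
noncomputable def socleDeg {K : Type*} [Field K] {n k : ℕ}
    (v : Fin n → Fin k → K) (S : Set (Fin n)) (L : MvPolynomial (Fin k) K) : ℕ :=
  sInf { d | ∃ g : MvPolynomial (Fin k) K, g.IsHomogeneous d ∧
      g ∉ projIdeal v S ⊔ Ideal.span {L} ∧
      ∀ j : Fin k, MvPolynomial.X j * g ∈ projIdeal v S ⊔ Ideal.span {L} }
attribute [local instance] MvPolynomial.gradedAlgebra

section Aux
variable {K : Type*} [Field K] {n k : ℕ}

lemma projIdeal_isHomogeneous (v : Fin n → Fin k → K) (S : Set (Fin n)) :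
    Ideal.IsHomogeneous (homogeneousSubmodule (Fin k) K) (projIdeal v S) :=
  Ideal.homogeneous_span _ _ fun _x hx => hx.1

lemma homogeneousComponent_mem_projIdeal {v : Fin n → Fin k → K} {S : Set (Fin n)}
    {p : MvPolynomial (Fin k) K} (hp : p ∈ projIdeal v S) (i : ℕ) :
    homogeneousComponent i p ∈ projIdeal v S := by
  have := projIdeal_isHomogeneous v S i hp
  rwa [← MvPolynomial.decomposition.decompose'_apply]

lemma eval_eq_zero_of_mem_projIdeal {v : Fin n → Fin k → K} {S : Set (Fin n)}
    {p : MvPolynomial (Fin k) K} (hp : p ∈ projIdeal v S) {i : Fin n} (hi : i ∈ S) :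
    eval (v i) p = 0 := by
  have hle : projIdeal v S ≤ RingHom.ker (eval (v i)) :=
    Ideal.span_le.mpr fun f hf => hf.2 i hi
  exact hle hp

lemma homogeneousComponent_succ_mul {L : MvPolynomial (Fin k) K} (hL : L.IsHomogeneous 1)
    (g : MvPolynomial (Fin k) K) (e : ℕ) :
    homogeneousComponent (e + 1) (g * L) = homogeneousComponent e g * L := by
  classical
  conv_lhs => rw [← sum_homogeneousComponent g, Finset.sum_mul]
  rw [map_sum]
  have key : ∀ i, homogeneousComponent (e+1) (homogeneousComponent i g * L)
      = if e + 1 = i + 1 then homogeneousComponent i g * L else 0 := fun i =>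
    homogeneousComponent_of_mem ((homogeneousComponent_isHomogeneous i g).mul hL)
  simp_rw [key, add_left_inj]
  rw [Finset.sum_ite_eq (Finset.range (g.totalDegree + 1)) e
    (fun i => homogeneousComponent i g * L)]
  split_ifs with he
  · rfl
  · rw [homogeneousComponent_eq_zero, zero_mul]
    simpa using he

lemma homogeneousComponent_zero_mul' {L : MvPolynomial (Fin k) K} (hL : L.IsHomogeneous 1)
    (g : MvPolynomial (Fin k) K) : homogeneousComponent 0 (g * L) = 0 := by
  classical
  conv_lhs => rw [← sum_homogeneousComponent g, Finset.sum_mul]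
  rw [map_sum]
  refine Finset.sum_eq_zero fun i _ => ?_
  rw [homogeneousComponent_of_mem ((homogeneousComponent_isHomogeneous i g).mul hL),
    if_neg (by omega)]

lemma Xmul_mem (v : Fin n → Fin k → K) (q : Fin n)
    {L : MvPolynomial (Fin k) K} (hL : L.IsHomogeneous 1) (hLq : eval (v q) L ≠ 0)
    {d : ℕ} {h : MvPolynomial (Fin k) K} (hh : h.IsHomogeneous d)
    (hvan : ∀ i, i ≠ q → eval (v i) h = 0) (j : Fin k) :
    X j * h ∈ projIdeal v Set.univ ⊔ Ideal.span {L} := by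
  classical
  set c := eval (v q) L with hc
  set f := C c * (X j * h) - C (v q j) * (L * h) with hf
  have hfI : f ∈ projIdeal v Set.univ := by
    refine Ideal.subset_span ⟨⟨0 + (1 + d), ?_⟩, ?_⟩
    · exact ((isHomogeneous_C _ _).mul ((isHomogeneous_X _ _).mul hh)).sub
        ((isHomogeneous_C _ _).mul (hL.mul hh))
    · intro i _
      rcases eq_or_ne i q with rfl | hiq
      · simp only [hf, map_sub, map_mul, eval_C, eval_X, ← hc]
        ring
      · simp [hf, hvan i hiq]
  have hCc : C c⁻¹ * C c = (1 : MvPolynomial (Fin k) K) := by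
    rw [← C_mul, inv_mul_cancel₀ hLq, C_1]
  have key : X j * h = C c⁻¹ * f + C c⁻¹ * (C (v q j) * (L * h)) := by
    have hcf : C c * (X j * h) = f + C (v q j) * (L * h) := by rw [hf]; ring
    calc X j * h = (C c⁻¹ * C c) * (X j * h) := by rw [hCc, one_mul]
    _ = C c⁻¹ * (C c * (X j * h)) := by ring
    _ = C c⁻¹ * f + C c⁻¹ * (C (v q j) * (L * h)) := by rw [hcf]; ring
  rw [key]
  refine Ideal.add_mem _ (Ideal.mem_sup_left (Ideal.mul_mem_left _ _ hfI))
    (Ideal.mem_sup_right ?_)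
  exact Ideal.mul_mem_left _ _ (Ideal.mul_mem_left _ _
    (Ideal.mem_span_singleton.mpr ⟨h, rfl⟩))

end Aux

/-- Step 2 in the proof of Theorem 4.2: a homogeneous separator of a
point `Q ∈ Y` has degree at least `s(Y)`. -/
theorem separator_degree_ge_socleDeg {K : Type*} [Field K] {n k : ℕ}
    (hk : 2 ≤ k)
    (v : Fin n → Fin k → K) (hv0 : ∀ i, v i ≠ 0) (hdist : ProjectivelyDistinct v)
    (q : Fin n)
    (L : MvPolynomial (Fin k) K) (hL : L.IsHomogeneous 1)
    (hLne : ∀ i, eval (v i) L ≠ 0)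
    (d : ℕ) (h : MvPolynomial (Fin k) K) (hh : h.IsHomogeneous d)
    (hvan : ∀ i, i ≠ q → eval (v i) h = 0) (hq : eval (v q) h ≠ 0) :
    socleDeg v Set.univ L ≤ d := by
  classical
  revert h
  induction d with
  | zero =>
    intro h hh hvan hq
    by_cases hmem : h ∈ projIdeal v Set.univ ⊔ Ideal.span {L}
    · exfalso
      obtain ⟨p, hp, z, hz, hpz⟩ := Submodule.mem_sup.mp hmem
      obtain ⟨g, hg⟩ := Ideal.mem_span_singleton'.mp hz
      have h0 : homogeneousComponent 0 h = h := by
        rw [homogeneousComponent_of_mem hh, if_pos rfl]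
      have hE : h = homogeneousComponent 0 p := by
        conv_lhs => rw [← h0, ← hpz]
        rw [map_add, ← hg, homogeneousComponent_zero_mul' hL, add_zero]
      apply hq
      rw [hE]
      exact eval_eq_zero_of_mem_projIdeal (homogeneousComponent_mem_projIdeal hp 0)
        (Set.mem_univ q)
    · exact Nat.sInf_le ⟨h, hh, hmem, fun j => Xmul_mem v q hL (hLne q) hh hvan j⟩
  | succ e ih =>
    intro h hh hvan hq
    by_cases hmem : h ∈ projIdeal v Set.univ ⊔ Ideal.span {L}
    · obtain ⟨p, hp, z, hz, hpz⟩ := Submodule.mem_sup.mp hmem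
      obtain ⟨g, hg⟩ := Ideal.mem_span_singleton'.mp hz
      have h0 : homogeneousComponent (e + 1) h = h := by
        rw [homogeneousComponent_of_mem hh, if_pos rfl]
      have hdecomp : h = homogeneousComponent (e + 1) p + homogeneousComponent e g * L := by
        conv_lhs => rw [← h0, ← hpz]
        rw [map_add, ← hg, homogeneousComponent_succ_mul hL]
      have hp'eval : ∀ i : Fin n, eval (v i) (homogeneousComponent (e + 1) p) = 0 := fun i =>
        eval_eq_zero_of_mem_projIdeal (homogeneousComponent_mem_projIdeal hp _)
          (Set.mem_univ i)
      have hg'van : ∀ i, i ≠ q → eval (v i) (homogeneousComponent e g) = 0 := by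
        intro i hiq
        have hvi := hvan i hiq
        rw [hdecomp, map_add, map_mul, hp'eval i, zero_add] at hvi
        exact (mul_eq_zero.mp hvi).resolve_right (hLne i)
      have hg'q : eval (v q) (homogeneousComponent e g) ≠ 0 := by
        intro h0'
        apply hq
        rw [hdecomp, map_add, map_mul, hp'eval q, h0', zero_mul, zero_add]
      exact le_trans (ih (homogeneousComponent e g)
        (homogeneousComponent_isHomogeneous e g) hg'van hg'q) (Nat.le_succ e)
    · exact Nat.sInf_le ⟨h, hh, hmem, fun j => Xmul_mem v q hL (hLne q) hh hvan j⟩
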